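/- arXiv:2002.04964 — 4 statements merged into one kernel-verified Lean document; each statement's English description precedes it below -/
import Mathlib

section
/- Let η₁ > η₂ > 0 and a₁, a₂ ∈ ℝ with a₁ ≠ 0 and a₂ ≠ 0, and define on ℝ the functions v₁(x) = (a₁ e^{η₁x}/f(x)) · (1 + (a₂²/(4η₂²)) · ((η₁−η₂)/(η₁+η₂)) · e^{2η₂x}) and v₂(x) = (a₂ e^{η₂x}/f(x)) · (1 − (a₁²/(4η₁²)) · ((η₁−η₂)/(η₁+η₂)) · e^{2η₁x}), where f(x) = 1 + (a₁²/(4η₁²)) e^{2η₁x} + (a₂²/(4η₂²)) e^{2η₂x} + (a₁²a₂²/(16η₁²η₂²)) · ((η₁−η₂)²/(η₁+η₂)²) · e^{(2η₁+2η₂)x}. Then ∫_ℝ v₁(x)² dx = 2η₁ and ∫_ℝ v₂(x)² dx = 2η₂. -/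
open MeasureTheory Real Filter Set

noncomputable section

/-- Denominator of the Manakov two-soliton solution. -/
def fML (η₁ η₂ a₁ a₂ x : ℝ) : ℝ :=
  1 + a₁ ^ 2 / (4 * η₁ ^ 2) * Real.exp (2 * η₁ * x)
    + a₂ ^ 2 / (4 * η₂ ^ 2) * Real.exp (2 * η₂ * x)
    + a₁ ^ 2 * a₂ ^ 2 / (16 * η₁ ^ 2 * η₂ ^ 2) * ((η₁ - η₂) ^ 2 / (η₁ + η₂) ^ 2)
        * Real.exp ((2 * η₁ + 2 * η₂) * x)

/-- First component of the explicit Manakov solution. -/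
def v1ML (η₁ η₂ a₁ a₂ x : ℝ) : ℝ :=
  a₁ * Real.exp (η₁ * x) / fML η₁ η₂ a₁ a₂ x *
    (1 + a₂ ^ 2 / (4 * η₂ ^ 2) * ((η₁ - η₂) / (η₁ + η₂)) * Real.exp (2 * η₂ * x))

/-- Second component of the explicit Manakov solution. -/
def v2ML (η₁ η₂ a₁ a₂ x : ℝ) : ℝ :=
  a₂ * Real.exp (η₂ * x) / fML η₁ η₂ a₁ a₂ x *
    (1 - a₁ ^ 2 / (4 * η₁ ^ 2) * ((η₁ - η₂) / (η₁ + η₂)) * Real.exp (2 * η₁ * x))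


lemma integrable_of_deriv_nonneg_tendsto (F h : ℝ → ℝ) (m n : ℝ)
    (hF : ∀ x, HasDerivAt F (h x) x) (hpos : ∀ x, 0 ≤ h x)
    (hbot : Tendsto F atBot (nhds m)) (htop : Tendsto F atTop (nhds n)) :
    Integrable h := by
  have I1 : IntegrableOn h (Ioi 0) :=
    integrableOn_Ioi_deriv_of_nonneg' (fun x _ => hF x) (fun x _ => hpos x) htop
  have hd : ∀ x : ℝ, HasDerivAt (fun y => -F (-y)) (h (-x)) x := by
    intro x
    have := ((hF (-x)).comp x (hasDerivAt_neg x)).neg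
    simp only [mul_neg, mul_one, neg_neg] at this
    exact this
  have I2 : IntegrableOn (fun x => h (-x)) (Ioi 0) :=
    integrableOn_Ioi_deriv_of_nonneg' (g := fun y => -F (-y)) (l := -m)
      (fun x _ => hd x) (fun x _ => hpos _) (hbot.comp tendsto_neg_atTop_atBot).neg
  have I3 : IntegrableOn h (Iio 0) := by
    have := (MeasurePreserving.integrableOn_comp_preimage
      (Measure.measurePreserving_neg (volume : Measure ℝ))
      (Homeomorph.neg ℝ).measurableEmbedding).2 I2
    have heq : ((fun x => h (-x)) ∘ Neg.neg) = h := by funext y; simp [Function.comp]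
    rw [heq] at this
    simpa using this
  have I4 : IntegrableOn h (Ici 0) := (integrableOn_Ici_iff_integrableOn_Ioi (by simp)).2 I1
  have := I3.union I4
  rwa [Iio_union_Ici, integrableOn_univ] at this

set_option maxHeartbeats 2000000 in
lemma aux_v1 (η₁ η₂ a₁ a₂ : ℝ) (h1 : 0 < η₁) (h2 : 0 < η₂) (hne : η₁ ≠ η₂)
    (ha₁ : a₁ ≠ 0) (ha₂ : a₂ ≠ 0) :
    (∫ x : ℝ, (v1ML η₁ η₂ a₁ a₂ x) ^ 2) = 2 * η₁ := by
  have hη1 : η₁ ≠ 0 := ne_of_gt h1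
  have hη2 : η₂ ≠ 0 := ne_of_gt h2
  have hsum : η₁ + η₂ ≠ 0 := by positivity
  have hdiff : η₁ - η₂ ≠ 0 := sub_ne_zero.mpr hne
  have ha1sq : (0:ℝ) < a₁ ^ 2 := lt_of_le_of_ne (sq_nonneg _) (Ne.symm (pow_ne_zero 2 ha₁))
  have ha2sq : (0:ℝ) < a₂ ^ 2 := lt_of_le_of_ne (sq_nonneg _) (Ne.symm (pow_ne_zero 2 ha₂))
  have hdsq : (0:ℝ) < (η₁ - η₂) ^ 2 := lt_of_le_of_ne (sq_nonneg _) (Ne.symm (pow_ne_zero 2 hdiff))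
  -- positivity of the denominator
  have hfpos : ∀ x, 0 < fML η₁ η₂ a₁ a₂ x := by
    intro x; unfold fML; positivity
  have hfne : ∀ x, fML η₁ η₂ a₁ a₂ x ≠ 0 := fun x => (hfpos x).ne'
  -- exp rewrites
  have e1p : ∀ x : ℝ, Real.exp (2 * η₁ * x) = Real.exp (η₁ * x) * Real.exp (η₁ * x) := by
    intro x; rw [← Real.exp_add]; congr 1; ring
  have e2p : ∀ x : ℝ, Real.exp (2 * η₂ * x) = Real.exp (η₂ * x) * Real.exp (η₂ * x) := by
    intro x; rw [← Real.exp_add]; congr 1; ring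
  have e12p : ∀ x : ℝ, Real.exp ((2 * η₁ + 2 * η₂) * x)
      = Real.exp (η₁ * x) * Real.exp (η₁ * x) * (Real.exp (η₂ * x) * Real.exp (η₂ * x)) := by
    intro x; rw [← Real.exp_add, ← Real.exp_add, ← Real.exp_add]; congr 1; ring
  -- derivatives of the elementary exponentials
  have hE1 : ∀ x : ℝ, HasDerivAt (fun y => Real.exp (2 * η₁ * y))
      (Real.exp (2 * η₁ * x) * (2 * η₁)) x := by
    intro x
    have := ((hasDerivAt_id x).const_mul (2 * η₁)).exp
    simpa using this
  have hE2 : ∀ x : ℝ, HasDerivAt (fun y => Real.exp (2 * η₂ * y))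
      (Real.exp (2 * η₂ * x) * (2 * η₂)) x := by
    intro x
    have := ((hasDerivAt_id x).const_mul (2 * η₂)).exp
    simpa using this
  have hE12 : ∀ x : ℝ, HasDerivAt (fun y => Real.exp ((2 * η₁ + 2 * η₂) * y))
      (Real.exp ((2 * η₁ + 2 * η₂) * x) * (2 * η₁ + 2 * η₂)) x := by
    intro x
    have := ((hasDerivAt_id x).const_mul (2 * η₁ + 2 * η₂)).exp
    simpa using this
  -- derivative of fML
  have hfd : ∀ x : ℝ, HasDerivAt (fML η₁ η₂ a₁ a₂)
      (a₁ ^ 2 / (4 * η₁ ^ 2) * (Real.exp (2 * η₁ * x) * (2 * η₁))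
        + a₂ ^ 2 / (4 * η₂ ^ 2) * (Real.exp (2 * η₂ * x) * (2 * η₂))
        + a₁ ^ 2 * a₂ ^ 2 / (16 * η₁ ^ 2 * η₂ ^ 2) * ((η₁ - η₂) ^ 2 / (η₁ + η₂) ^ 2)
            * (Real.exp ((2 * η₁ + 2 * η₂) * x) * (2 * η₁ + 2 * η₂))) x := by
    intro x
    have := (((hasDerivAt_const x (1:ℝ)).add ((hE1 x).const_mul (a₁ ^ 2 / (4 * η₁ ^ 2)))).add
      ((hE2 x).const_mul (a₂ ^ 2 / (4 * η₂ ^ 2)))).add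
      ((hE12 x).const_mul (a₁ ^ 2 * a₂ ^ 2 / (16 * η₁ ^ 2 * η₂ ^ 2)
        * ((η₁ - η₂) ^ 2 / (η₁ + η₂) ^ 2)))
    simp only [zero_add] at this
    exact this
  -- the antiderivative F
  set F : ℝ → ℝ := fun y =>
      (2 * η₁ * (a₁ ^ 2 / (4 * η₁ ^ 2)) * Real.exp (2 * η₁ * y)
        + 2 * η₁ * (a₁ ^ 2 / (4 * η₁ ^ 2)) * (a₂ ^ 2 / (4 * η₂ ^ 2))
            * ((η₁ - η₂) ^ 2 / (η₁ + η₂) ^ 2) * Real.exp ((2 * η₁ + 2 * η₂) * y))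
      / fML η₁ η₂ a₁ a₂ y with hFdef
  have hN : ∀ x : ℝ, HasDerivAt (fun y =>
      2 * η₁ * (a₁ ^ 2 / (4 * η₁ ^ 2)) * Real.exp (2 * η₁ * y)
        + 2 * η₁ * (a₁ ^ 2 / (4 * η₁ ^ 2)) * (a₂ ^ 2 / (4 * η₂ ^ 2))
            * ((η₁ - η₂) ^ 2 / (η₁ + η₂) ^ 2) * Real.exp ((2 * η₁ + 2 * η₂) * y))
      (2 * η₁ * (a₁ ^ 2 / (4 * η₁ ^ 2)) * (Real.exp (2 * η₁ * x) * (2 * η₁))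
        + 2 * η₁ * (a₁ ^ 2 / (4 * η₁ ^ 2)) * (a₂ ^ 2 / (4 * η₂ ^ 2))
            * ((η₁ - η₂) ^ 2 / (η₁ + η₂) ^ 2)
            * (Real.exp ((2 * η₁ + 2 * η₂) * x) * (2 * η₁ + 2 * η₂))) x := by
    intro x
    exact ((hE1 x).const_mul _).add ((hE12 x).const_mul _)
  have hFd : ∀ x : ℝ, HasDerivAt F ((v1ML η₁ η₂ a₁ a₂ x) ^ 2) x := by
    intro x
    have h := (hN x).div (hfd x) (hfne x)
    rw [hFdef]
    refine h.congr_deriv ?_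
    have hf0 : (0:ℝ) < 1 + a₁ ^ 2 / (4 * η₁ ^ 2) * (Real.exp (η₁ * x) * Real.exp (η₁ * x))
        + a₂ ^ 2 / (4 * η₂ ^ 2) * (Real.exp (η₂ * x) * Real.exp (η₂ * x))
        + a₁ ^ 2 * a₂ ^ 2 / (16 * η₁ ^ 2 * η₂ ^ 2) * ((η₁ - η₂) ^ 2 / (η₁ + η₂) ^ 2)
            * (Real.exp (η₁ * x) * Real.exp (η₁ * x) * (Real.exp (η₂ * x) * Real.exp (η₂ * x))) := by
      positivity
    simp only [v1ML, fML, e1p, e2p, e12p]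
    field_simp [hf0.ne']
    ring
  -- limit at -∞
  have l1 : Tendsto (fun x => Real.exp (2 * η₁ * x)) atBot (nhds 0) :=
    Real.tendsto_exp_atBot.comp (tendsto_id.const_mul_atBot (by positivity))
  have l2 : Tendsto (fun x => Real.exp (2 * η₂ * x)) atBot (nhds 0) :=
    Real.tendsto_exp_atBot.comp (tendsto_id.const_mul_atBot (by positivity))
  have l12 : Tendsto (fun x => Real.exp ((2 * η₁ + 2 * η₂) * x)) atBot (nhds 0) :=
    Real.tendsto_exp_atBot.comp (tendsto_id.const_mul_atBot (by positivity))
  have hfbot : Tendsto (fML η₁ η₂ a₁ a₂) atBot (nhds 1) := by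
    have := ((((tendsto_const_nhds : Tendsto (fun _ : ℝ => (1:ℝ)) atBot (nhds 1)).add
      (l1.const_mul (a₁ ^ 2 / (4 * η₁ ^ 2)))).add
      (l2.const_mul (a₂ ^ 2 / (4 * η₂ ^ 2)))).add
      (l12.const_mul (a₁ ^ 2 * a₂ ^ 2 / (16 * η₁ ^ 2 * η₂ ^ 2)
        * ((η₁ - η₂) ^ 2 / (η₁ + η₂) ^ 2))))
    simp only [mul_zero, add_zero] at this
    exact this
  have hFbot : Tendsto F atBot (nhds 0) := by
    have hnum := (l1.const_mul (2 * η₁ * (a₁ ^ 2 / (4 * η₁ ^ 2)))).add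
      (l12.const_mul (2 * η₁ * (a₁ ^ 2 / (4 * η₁ ^ 2)) * (a₂ ^ 2 / (4 * η₂ ^ 2))
        * ((η₁ - η₂) ^ 2 / (η₁ + η₂) ^ 2)))
    have := hnum.div hfbot one_ne_zero
    simp only [mul_zero, add_zero, zero_div] at this
    exact this
  -- limit at +∞
  have i1 : Tendsto (fun x => (Real.exp (2 * η₁ * x))⁻¹) atTop (nhds 0) := by
    have := (Real.tendsto_exp_atTop.comp (tendsto_id.const_mul_atTop (by positivity :
      (0:ℝ) < 2 * η₁))).inv_tendsto_atTop
    exact this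
  have i2 : Tendsto (fun x => (Real.exp (2 * η₂ * x))⁻¹) atTop (nhds 0) := by
    have := (Real.tendsto_exp_atTop.comp (tendsto_id.const_mul_atTop (by positivity :
      (0:ℝ) < 2 * η₂))).inv_tendsto_atTop
    exact this
  set K : ℝ := a₁ ^ 2 * a₂ ^ 2 / (16 * η₁ ^ 2 * η₂ ^ 2) * ((η₁ - η₂) ^ 2 / (η₁ + η₂) ^ 2)
    with hKdef
  have hKpos : 0 < K := by rw [hKdef]; positivity
  set G : ℝ → ℝ := fun y =>
      (2 * η₁ * (a₁ ^ 2 / (4 * η₁ ^ 2)) * (Real.exp (2 * η₂ * y))⁻¹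
        + 2 * η₁ * (a₁ ^ 2 / (4 * η₁ ^ 2)) * (a₂ ^ 2 / (4 * η₂ ^ 2))
            * ((η₁ - η₂) ^ 2 / (η₁ + η₂) ^ 2))
      / ((Real.exp (2 * η₁ * y))⁻¹ * (Real.exp (2 * η₂ * y))⁻¹
        + a₁ ^ 2 / (4 * η₁ ^ 2) * (Real.exp (2 * η₂ * y))⁻¹
        + a₂ ^ 2 / (4 * η₂ ^ 2) * (Real.exp (2 * η₁ * y))⁻¹ + K) with hGdef
  have hFG : ∀ x : ℝ, F x = G x := by
    intro x
    rw [hFdef, hGdef, hKdef]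
    have hf0 : (0:ℝ) < 1 + a₁ ^ 2 / (4 * η₁ ^ 2) * (Real.exp (η₁ * x) * Real.exp (η₁ * x))
        + a₂ ^ 2 / (4 * η₂ ^ 2) * (Real.exp (η₂ * x) * Real.exp (η₂ * x))
        + a₁ ^ 2 * a₂ ^ 2 / (16 * η₁ ^ 2 * η₂ ^ 2) * ((η₁ - η₂) ^ 2 / (η₁ + η₂) ^ 2)
            * (Real.exp (η₁ * x) * Real.exp (η₁ * x) * (Real.exp (η₂ * x) * Real.exp (η₂ * x))) := by
      positivity
    have hden : (0:ℝ) < (Real.exp (η₁ * x) * Real.exp (η₁ * x))⁻¹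
          * (Real.exp (η₂ * x) * Real.exp (η₂ * x))⁻¹
        + a₁ ^ 2 / (4 * η₁ ^ 2) * (Real.exp (η₂ * x) * Real.exp (η₂ * x))⁻¹
        + a₂ ^ 2 / (4 * η₂ ^ 2) * (Real.exp (η₁ * x) * Real.exp (η₁ * x))⁻¹
        + a₁ ^ 2 * a₂ ^ 2 / (16 * η₁ ^ 2 * η₂ ^ 2) * ((η₁ - η₂) ^ 2 / (η₁ + η₂) ^ 2) := by
      positivity
    simp only [fML, e1p, e2p, e12p]
    field_simp [hf0.ne', hden.ne']
  have hGtop : Tendsto G atTop (nhds (2 * η₁)) := by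
    have hnum : Tendsto (fun y =>
        2 * η₁ * (a₁ ^ 2 / (4 * η₁ ^ 2)) * (Real.exp (2 * η₂ * y))⁻¹
          + 2 * η₁ * (a₁ ^ 2 / (4 * η₁ ^ 2)) * (a₂ ^ 2 / (4 * η₂ ^ 2))
              * ((η₁ - η₂) ^ 2 / (η₁ + η₂) ^ 2)) atTop
        (nhds (2 * η₁ * (a₁ ^ 2 / (4 * η₁ ^ 2)) * 0
          + 2 * η₁ * (a₁ ^ 2 / (4 * η₁ ^ 2)) * (a₂ ^ 2 / (4 * η₂ ^ 2))
              * ((η₁ - η₂) ^ 2 / (η₁ + η₂) ^ 2))) :=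
      (i2.const_mul _).add tendsto_const_nhds
    have hden : Tendsto (fun y =>
        (Real.exp (2 * η₁ * y))⁻¹ * (Real.exp (2 * η₂ * y))⁻¹
          + a₁ ^ 2 / (4 * η₁ ^ 2) * (Real.exp (2 * η₂ * y))⁻¹
          + a₂ ^ 2 / (4 * η₂ ^ 2) * (Real.exp (2 * η₁ * y))⁻¹ + K) atTop
        (nhds (0 * 0 + a₁ ^ 2 / (4 * η₁ ^ 2) * 0 + a₂ ^ 2 / (4 * η₂ ^ 2) * 0 + K)) :=
      (((i1.mul i2).add (i2.const_mul _)).add (i1.const_mul _)).add tendsto_const_nhds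
    have h := hnum.div hden (by simpa using hKpos.ne')
    rw [hGdef]
    convert h using 2
    · rfl
    rw [hKdef]
    field_simp
    ring
  have hFtop : Tendsto F atTop (nhds (2 * η₁)) := hGtop.congr (fun x => (hFG x).symm)
  have hint : Integrable (fun x => (v1ML η₁ η₂ a₁ a₂ x) ^ 2) :=
    integrable_of_deriv_nonneg_tendsto F _ 0 (2 * η₁) hFd (fun x => sq_nonneg _) hFbot hFtop
  have := integral_of_hasDerivAt_of_tendsto hFd hint hFbot hFtop
  simpa using this

/-- Normalisation of the explicit Manakov solutions: ∫ v₁² = 2η₁ and ∫ v₂² = 2η₂. -/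
theorem ODE_normalisation (η₁ η₂ a₁ a₂ : ℝ) (h21 : η₂ < η₁) (h2 : 0 < η₂)
    (ha₁ : a₁ ≠ 0) (ha₂ : a₂ ≠ 0) :
    (∫ x : ℝ, (v1ML η₁ η₂ a₁ a₂ x) ^ 2) = 2 * η₁ ∧
    (∫ x : ℝ, (v2ML η₁ η₂ a₁ a₂ x) ^ 2) = 2 * η₂ := by

  have h1 : 0 < η₁ := h2.trans h21
  refine ⟨aux_v1 η₁ η₂ a₁ a₂ h1 h2 (ne_of_gt h21) ha₁ ha₂, ?_⟩
  have hswap : ∀ x : ℝ, v2ML η₁ η₂ a₁ a₂ x = v1ML η₂ η₁ a₂ a₁ x := by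
    intro x
    simp only [v2ML, v1ML, fML]
    rw [show (2 * η₂ + 2 * η₁) * x = (2 * η₁ + 2 * η₂) * x from by ring]
    have hs : η₂ + η₁ ≠ 0 := by positivity
    field_simp
    ring
  calc (∫ x : ℝ, (v2ML η₁ η₂ a₁ a₂ x) ^ 2) = ∫ x : ℝ, (v1ML η₂ η₁ a₂ a₁ x) ^ 2 := by
        simp_rw [hswap]
    _ = 2 * η₂ := aux_v1 η₂ η₁ a₂ a₁ h2 h1 (ne_of_lt h21) ha₂ ha₁

end
end

section
/- Let μ₁, μ₂ < 0 and let v₁, v₂ : ℝ → ℝ be twice continuously differentiable solutions of the system v₁'' + 2(v₁²+v₂²)v₁ + μ₁v₁ = 0, v₂'' + 2(v₁²+v₂²)v₂ + μ₂v₂ = 0, such that v_j(x) → 0 and v_j'(x) → 0 as |x| → ∞ for j = 1, 2. Then the following two identities hold for every x ∈ ℝ: (i) (v₁²+v₂²)² + (v₁')² + (v₂')² + μ₁v₁² + μ₂v₂² = 0; (ii) (v₁²+v₂²)(μ₁v₂² + μ₂v₁² + μ₁μ₂) + (v₁v₂' − v₁'v₂)² + μ₂(v₁')² + μ₁(v₂')²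 = 0. -/
open MeasureTheory Real Filter

noncomputable section

private lemma zero_of_deriv_zero (g : ℝ → ℝ) (hg : ∀ x, HasDerivAt g 0 x)
    (h0 : Tendsto g (cocompact ℝ) (nhds 0)) : ∀ x, g x = 0 := by
  intro x
  have hconst : ∀ y, g y = g x := by
    intro y
    exact is_const_of_deriv_eq_zero (fun t => (hg t).differentiableAt)
      (fun t => (hg t).deriv) y x
  have : Tendsto g (cocompact ℝ) (nhds (g x)) := by
    have : g = fun _ => g x := funext hconst
    rw [this]; exact tendsto_const_nhds
  exact tendsto_nhds_unique this h0

/-- The two constants of motion of the integrable coupled NLS system, for decaying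
solutions. -/
theorem constants_of_motion (μ₁ μ₂ : ℝ) (h1 : μ₁ < 0) (h2 : μ₂ < 0)
    (v₁ v₂ : ℝ → ℝ) (hC1 : ContDiff ℝ 2 v₁) (hC2 : ContDiff ℝ 2 v₂)
    (heq1 : ∀ x, deriv (deriv v₁) x + 2 * ((v₁ x) ^ 2 + (v₂ x) ^ 2) * v₁ x + μ₁ * v₁ x = 0)
    (heq2 : ∀ x, deriv (deriv v₂) x + 2 * ((v₁ x) ^ 2 + (v₂ x) ^ 2) * v₂ x + μ₂ * v₂ x = 0)
    (hd1 : Tendsto v₁ (cocompact ℝ) (nhds 0))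
    (hd2 : Tendsto v₂ (cocompact ℝ) (nhds 0))
    (hd1' : Tendsto (deriv v₁) (cocompact ℝ) (nhds 0))
    (hd2' : Tendsto (deriv v₂) (cocompact ℝ) (nhds 0)) :
    ∀ x : ℝ,
      ((v₁ x) ^ 2 + (v₂ x) ^ 2) ^ 2 + (deriv v₁ x) ^ 2 + (deriv v₂ x) ^ 2
          + μ₁ * (v₁ x) ^ 2 + μ₂ * (v₂ x) ^ 2 = 0 ∧
      ((v₁ x) ^ 2 + (v₂ x) ^ 2) * (μ₁ * (v₂ x) ^ 2 + μ₂ * (v₁ x) ^ 2 + μ₁ * μ₂)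
          + (v₁ x * deriv v₂ x - deriv v₁ x * v₂ x) ^ 2
          + μ₂ * (deriv v₁ x) ^ 2 + μ₁ * (deriv v₂ x) ^ 2 = 0 := by
  have hv1 : ∀ x, HasDerivAt v₁ (deriv v₁ x) x :=
    fun x => ((hC1.differentiable two_ne_zero) x).hasDerivAt
  have hv2 : ∀ x, HasDerivAt v₂ (deriv v₂ x) x :=
    fun x => ((hC2.differentiable two_ne_zero) x).hasDerivAt
  have hC1' : ContDiff ℝ 1 (deriv v₁) := by
    have h : ContDiff ℝ ((1:WithTop ℕ∞) + 1) v₁ := by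
      have e : ((1:WithTop ℕ∞) + 1) = 2 := by norm_num
      rw [e]; exact hC1
    exact (contDiff_succ_iff_deriv.mp h).2.2
  have hC2' : ContDiff ℝ 1 (deriv v₂) := by
    have h : ContDiff ℝ ((1:WithTop ℕ∞) + 1) v₂ := by
      have e : ((1:WithTop ℕ∞) + 1) = 2 := by norm_num
      rw [e]; exact hC2
    exact (contDiff_succ_iff_deriv.mp h).2.2
  have hv1' : ∀ x, HasDerivAt (deriv v₁) (deriv (deriv v₁) x) x :=
    fun x => ((hC1'.differentiable one_ne_zero) x).hasDerivAt
  have hv2' : ∀ x, HasDerivAt (deriv v₂) (deriv (deriv v₂) x) x :=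
    fun x => ((hC2'.differentiable one_ne_zero) x).hasDerivAt
  -- First constant of motion
  set E : ℝ → ℝ := fun x =>
    ((v₁ x) ^ 2 + (v₂ x) ^ 2) ^ 2 + (deriv v₁ x) ^ 2 + (deriv v₂ x) ^ 2
      + μ₁ * (v₁ x) ^ 2 + μ₂ * (v₂ x) ^ 2 with hE
  have hEderiv : ∀ x, HasDerivAt E 0 x := by
    intro x
    have H :=
      (((((((hv1 x).pow 2).add ((hv2 x).pow 2)).pow 2).add ((hv1' x).pow 2)).add
        ((hv2' x).pow 2)).add (((hv1 x).pow 2).const_mul μ₁)).add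
        (((hv2 x).pow 2).const_mul μ₂)
    refine H.congr_deriv (Eq.symm ?_)
    simp only [Pi.add_apply, Pi.pow_apply, Pi.mul_apply, Pi.sub_apply]
    linear_combination (-2 * deriv v₁ x) * heq1 x + (-2 * deriv v₂ x) * heq2 x
  have hElim : Tendsto E (cocompact ℝ) (nhds 0) := by
    have : Tendsto E (cocompact ℝ) (nhds
        ((((0:ℝ) ^ 2 + 0 ^ 2) ^ 2 + 0 ^ 2 + 0 ^ 2 + μ₁ * 0 ^ 2 + μ₂ * 0 ^ 2))) :=
      (((((hd1.pow 2).add (hd2.pow 2)).pow 2).add (hd1'.pow 2)).add (hd2'.pow 2)).add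
        ((hd1.pow 2).const_mul μ₁) |>.add ((hd2.pow 2).const_mul μ₂)
    simpa using this
  have hEzero := zero_of_deriv_zero E hEderiv hElim
  -- Second constant of motion
  set F : ℝ → ℝ := fun x =>
    ((v₁ x) ^ 2 + (v₂ x) ^ 2) * (μ₁ * (v₂ x) ^ 2 + μ₂ * (v₁ x) ^ 2 + μ₁ * μ₂)
      + (v₁ x * deriv v₂ x - deriv v₁ x * v₂ x) ^ 2
      + μ₂ * (deriv v₁ x) ^ 2 + μ₁ * (deriv v₂ x) ^ 2 with hF
  have hFderiv : ∀ x, HasDerivAt F 0 x := by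
    intro x
    have H :=
      (((((hv1 x).pow 2).add ((hv2 x).pow 2)).mul
          (((((hv2 x).pow 2).const_mul μ₁).add (((hv1 x).pow 2).const_mul μ₂)).add_const
            (μ₁ * μ₂))).add
        ((((hv1 x).mul (hv2' x)).sub ((hv1' x).mul (hv2 x))).pow 2)).add
        (((hv1' x).pow 2).const_mul μ₂) |>.add (((hv2' x).pow 2).const_mul μ₁)
    refine H.congr_deriv (Eq.symm ?_)
    simp only [Pi.add_apply, Pi.pow_apply, Pi.mul_apply, Pi.sub_apply]
    linear_combination
      (-2 * μ₂ * deriv v₁ x + 2 * (v₁ x * deriv v₂ x - deriv v₁ x * v₂ x) * v₂ x) * heq1 x +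
      (-2 * μ₁ * deriv v₂ x - 2 * (v₁ x * deriv v₂ x - deriv v₁ x * v₂ x) * v₁ x) * heq2 x
  have hFlim : Tendsto F (cocompact ℝ) (nhds 0) := by
    have : Tendsto F (cocompact ℝ) (nhds
        (((0:ℝ) ^ 2 + 0 ^ 2) * (μ₁ * 0 ^ 2 + μ₂ * 0 ^ 2 + μ₁ * μ₂)
          + (0 * 0 - 0 * 0) ^ 2 + μ₂ * 0 ^ 2 + μ₁ * 0 ^ 2)) :=
      ((((hd1.pow 2).add (hd2.pow 2)).mul
          ((((hd2.pow 2).const_mul μ₁).add ((hd1.pow 2).const_mul μ₂)).add_const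
            (μ₁ * μ₂))).add
        (((hd1.mul hd2').sub (hd1'.mul hd2)).pow 2)).add
        ((hd1'.pow 2).const_mul μ₂) |>.add ((hd2'.pow 2).const_mul μ₁)
    simpa using this
  have hFzero := zero_of_deriv_zero F hFderiv hFlim
  exact fun x => ⟨hEzero x, hFzero x⟩

end
end

section
/- Let X be a measure space and p > r ≥ 0. Then for any measurable function f on X, ((p−r)^{p−r} · r^r / p^p)^{1/p} · [f]'_{p,0} ≤ [f]'_{p,r} ≤ (Γ(p−r)Γ(r+1)/Γ(p))^{1/p} · [f]'_{p,0}, with the convention 0⁰ = 1. -/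
open MeasureTheory Real
open scoped ENNReal

noncomputable section

open Set

/-- Pull a nonneg constant out of a lintegral of `ofReal`. -/
lemma lint_ofReal_mul_const {s : Set ℝ} (g : ℝ → ℝ) {c : ℝ} (hc : 0 ≤ c) :
    ∫⁻ t in s, ENNReal.ofReal (g t * c) = (∫⁻ t in s, ENNReal.ofReal (g t)) * ENNReal.ofReal c := by
  simp_rw [ENNReal.ofReal_mul' hc]
  exact lintegral_mul_const' _ _ ENNReal.ofReal_ne_top

/-- `∫⁻ t in (0,∞), t^(a-1) e^{-bt} = (1/b)^a Γ(a)` in `ℝ≥0∞`. -/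
lemma lintA {a b : ℝ} (ha : 0 < a) (hb : 0 < b) :
    ∫⁻ t in Ioi (0:ℝ), ENNReal.ofReal (t ^ (a - 1) * Real.exp (-(b * t)))
      = ENNReal.ofReal ((1 / b) ^ a * Real.Gamma a) := by
  have hint : IntegrableOn (fun t : ℝ => t ^ (a - 1) * Real.exp (-(b * t))) (Ioi 0) := by
    have := integrableOn_rpow_mul_exp_neg_mul_rpow (s := a - 1) (p := 1) (b := b)
      (by linarith) one_pos hb
    refine this.congr_fun (fun x hx => ?_) measurableSet_Ioi
    simp only [Real.rpow_one, neg_mul]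
  rw [← MeasureTheory.ofReal_integral_eq_lintegral_ofReal hint ?_]
  · rw [integral_rpow_mul_exp_neg_mul_Ioi ha hb]
  · filter_upwards [self_mem_ae_restrict (measurableSet_Ioi : MeasurableSet (Ioi (0:ℝ)))]
      with t ht
    exact mul_nonneg (Real.rpow_nonneg (le_of_lt ht) _) (Real.exp_pos _).le

/-- Beta-type integral: `∫⁻ t in (0,∞), (τ+t)^(-p) t^(r-1) = τ^(r-p) Γ(r)Γ(p-r)/Γ(p)`. -/
lemma lintB {p r τ : ℝ} (hr : 0 < r) (hpr : r < p) (hτ : 0 < τ) :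
    ∫⁻ t in Ioi (0:ℝ), ENNReal.ofReal ((τ + t) ^ (-p) * t ^ (r - 1))
      = ENNReal.ofReal (τ ^ (r - p) * (Real.Gamma r * Real.Gamma (p - r) / Real.Gamma p)) := by
  have hp : 0 < p := hr.trans hpr
  have hΓp : 0 < Real.Gamma p := Real.Gamma_pos_of_pos hp
  have hΓr : 0 < Real.Gamma r := Real.Gamma_pos_of_pos hr
  have step1 : ∀ t ∈ Ioi (0:ℝ),
      ENNReal.ofReal ((τ + t) ^ (-p) * t ^ (r - 1))
        = ∫⁻ s in Ioi (0:ℝ),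
            ENNReal.ofReal ((s ^ (p - 1) * Real.exp (-((τ + t) * s))) * (t ^ (r - 1) / Real.Gamma p)) := by
    intro t ht
    rw [mem_Ioi] at ht
    have hτt : 0 < τ + t := by linarith
    rw [lint_ofReal_mul_const _ (by positivity), lintA hp hτt, ← ENNReal.ofReal_mul (by positivity)]
    congr 1
    rw [one_div, Real.inv_rpow hτt.le, ← Real.rpow_neg hτt.le]
    field_simp
  rw [setLIntegral_congr_fun measurableSet_Ioi step1]
  rw [lintegral_lintegral_swap]
  · have step3 : ∀ s ∈ Ioi (0:ℝ),
        (∫⁻ t in Ioi (0:ℝ),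
            ENNReal.ofReal ((s ^ (p - 1) * Real.exp (-((τ + t) * s))) * (t ^ (r - 1) / Real.Gamma p)))
          = ENNReal.ofReal ((s ^ (p - r - 1) * Real.exp (-(τ * s))) * (Real.Gamma r / Real.Gamma p)) := by
      intro s hs
      rw [mem_Ioi] at hs
      have e1 : ∀ t ∈ Ioi (0:ℝ),
          ENNReal.ofReal ((s ^ (p - 1) * Real.exp (-((τ + t) * s))) * (t ^ (r - 1) / Real.Gamma p))
            = ENNReal.ofReal ((t ^ (r - 1) * Real.exp (-(s * t))) *
                (s ^ (p - 1) * Real.exp (-(τ * s)) / Real.Gamma p)) := by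
        intro t _
        congr 1
        rw [show -((τ + t) * s) = -(τ * s) + -(s * t) by ring, Real.exp_add]
        ring
      rw [setLIntegral_congr_fun measurableSet_Ioi e1,
        lint_ofReal_mul_const _ (by positivity), lintA hr hs, ← ENNReal.ofReal_mul (by positivity)]
      congr 1
      rw [one_div, Real.inv_rpow hs.le, ← Real.rpow_neg hs.le,
        show p - r - 1 = -r + (p - 1) by ring, Real.rpow_add hs]
      field_simp
    have h60 : (0:ℝ) ≤ (1/τ) ^ (p - r) * Real.Gamma (p - r) :=
      mul_nonneg (Real.rpow_nonneg (by positivity) _) (Real.Gamma_pos_of_pos (by linarith)).le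
    rw [setLIntegral_congr_fun measurableSet_Ioi step3,
      lint_ofReal_mul_const (fun s => s ^ (p - r - 1) * Real.exp (-(τ * s)))
        (c := Real.Gamma r / Real.Gamma p) (le_of_lt (div_pos hΓr hΓp)),
      show p - r - 1 = (p - r) - 1 by ring, lintA (by linarith) hτ,
      ← ENNReal.ofReal_mul h60]
    congr 1
    rw [one_div, Real.inv_rpow hτ.le, ← Real.rpow_neg hτ.le, show -(p-r) = r - p by ring]
    ring
  · apply Measurable.aemeasurable
    apply Measurable.ennreal_ofReal
    fun_prop


/-- The quantity [f]'_{p,r} = sup_{τ>0} τ^{1−r/p} (∫ (|f|−τ)₊^r)^{1/p}, with the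
convention (|f|−τ)₊⁰ = 1_{{|f|>τ}}, so that [f]'_{p,0} is the usual weak-L^p
quasinorm. -/
def weakq {α : Type*} [MeasurableSpace α] (μ : Measure α) (p r : ℝ) (f : α → ℝ) : ℝ≥0∞ :=
  ⨆ τ : {t : ℝ // 0 < t},
    ENNReal.ofReal ((τ : ℝ) ^ (1 - r / p)) *
      (∫⁻ x, (if r = 0 then Set.indicator {y | (τ : ℝ) < |f y|} (fun _ => (1 : ℝ≥0∞)) x
              else ENNReal.ofReal (max (|f x| - (τ : ℝ)) 0 ^ r)) ∂μ) ^ (1 / p)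

lemma weakq_zero {α : Type*} [MeasurableSpace α] (μ : Measure α) (p : ℝ) (f : α → ℝ)
    (hf : Measurable f) :
    weakq μ p 0 f
      = ⨆ τ : {t : ℝ // 0 < t},
          ENNReal.ofReal (τ : ℝ) * (μ {y | (τ : ℝ) < |f y|}) ^ (1 / p) := by
  unfold weakq
  refine iSup_congr fun τ => ?_
  simp only [eq_self_iff_true, if_true]
  rw [lintegral_indicator (measurableSet_lt measurable_const hf.abs)]
  simp [Real.rpow_one]

/-- The quasinorms [·]'_{p,r} for 0 ≤ r < p are all equivalent to the weak-L^p
quasinorm [·]'_{p,0}, with explicit constants. -/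
theorem weakq_equiv {α : Type*} [MeasurableSpace α] (μ : Measure α) (p r : ℝ)
    (hr : 0 ≤ r) (hpr : r < p) (f : α → ℝ) (hf : Measurable f) :
    ENNReal.ofReal (((p - r) ^ (p - r) * r ^ r / p ^ p) ^ (1 / p)) * weakq μ p 0 f
        ≤ weakq μ p r f ∧
      weakq μ p r f
        ≤ ENNReal.ofReal ((Real.Gamma (p - r) * Real.Gamma (r + 1) / Real.Gamma p) ^ (1 / p))
            * weakq μ p 0 f := by
  have hp : 0 < p := lt_of_le_of_lt hr hpr
  rcases eq_or_lt_of_le hr with hr0 | hr0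
  · -- r = 0 : both constants are 1
    subst hr0
    have hpp : (0:ℝ) < p ^ p := Real.rpow_pos_of_pos hp _
    have h1 : ((p - 0) ^ (p - 0) * (0:ℝ) ^ (0:ℝ) / p ^ p) ^ (1/p : ℝ) = 1 := by
      rw [Real.rpow_zero, sub_zero, mul_one, div_self hpp.ne', Real.one_rpow]
    have h2 : (Real.Gamma (p - 0) * Real.Gamma (0 + 1) / Real.Gamma p) ^ (1/p : ℝ) = 1 := by
      rw [sub_zero, zero_add, Real.Gamma_one, mul_one,
        div_self (Real.Gamma_pos_of_pos hp).ne', Real.one_rpow]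
    rw [h1, h2]
    simp
  · -- 0 < r
    have hpr' : (0:ℝ) < p - r := sub_pos.2 hpr
    have hΓp : 0 < Real.Gamma p := Real.Gamma_pos_of_pos hp
    have hΓr : 0 < Real.Gamma r := Real.Gamma_pos_of_pos hr0
    have hΓpr : 0 < Real.Gamma (p - r) := Real.Gamma_pos_of_pos hpr'
    set G : ℝ := Real.Gamma r * Real.Gamma (p - r) / Real.Gamma p with hGdef
    have hG : 0 < G := by positivity
    have hwr : weakq μ p r f
        = ⨆ τ : {t : ℝ // 0 < t},
            ENNReal.ofReal ((τ : ℝ) ^ (1 - r / p)) *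
              (∫⁻ x, ENNReal.ofReal (max (|f x| - (τ : ℝ)) 0 ^ r) ∂μ) ^ (1 / p) := by
      unfold weakq
      exact iSup_congr fun τ => by simp only [if_neg hr0.ne']
    constructor
    · -- lower bound
      rw [hwr, weakq_zero μ p f hf, ENNReal.mul_iSup]
      refine iSup_le fun σ0 => ?_
      obtain ⟨σ, hσ⟩ := σ0
      have hθpos : 0 < (p - r) / p := div_pos hpr' hp
      have hτpos : 0 < (p - r) / p * σ := mul_pos hθpos hσ
      refine le_trans ?_ (le_iSup (fun τ : {t : ℝ // 0 < t} =>
        ENNReal.ofReal ((τ : ℝ) ^ (1 - r / p)) *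
          (∫⁻ x, ENNReal.ofReal (max (|f x| - (τ : ℝ)) 0 ^ r) ∂μ) ^ (1 / p))
        ⟨(p - r) / p * σ, hτpos⟩)
      have hrpσ : 0 < r / p * σ := mul_pos (div_pos hr0 hp) hσ
      -- lower bound for the integral
      have hIlow : ENNReal.ofReal ((r / p * σ) ^ r) * μ {y | σ < |f y|}
          ≤ ∫⁻ x, ENNReal.ofReal (max (|f x| - (p - r) / p * σ) 0 ^ r) ∂μ := by
        have hpt : ∀ x ∈ {y | σ < |f y|},
            ENNReal.ofReal ((r / p * σ) ^ r)
              ≤ ENNReal.ofReal (max (|f x| - (p - r) / p * σ) 0 ^ r) := by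
          intro x hx
          apply ENNReal.ofReal_le_ofReal
          apply Real.rpow_le_rpow hrpσ.le ?_ hr0.le
          refine le_trans ?_ (le_max_left _ _)
          have hx' : σ < |f x| := hx
          have : (p - r) / p + r / p = 1 := by field_simp; ring
          nlinarith
        calc ENNReal.ofReal ((r / p * σ) ^ r) * μ {y | σ < |f y|}
            = ∫⁻ _ in {y | σ < |f y|}, ENNReal.ofReal ((r / p * σ) ^ r) ∂μ := by
              rw [setLIntegral_const]
          _ ≤ ∫⁻ x in {y | σ < |f y|}, ENNReal.ofReal (max (|f x| - (p - r) / p * σ) 0 ^ r) ∂μ := by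
              refine setLIntegral_mono ?_ hpt
              fun_prop
          _ ≤ ∫⁻ x, ENNReal.ofReal (max (|f x| - (p - r) / p * σ) 0 ^ r) ∂μ :=
              setLIntegral_le_lintegral _ _
      have hA : (0:ℝ) < (p - r) ^ (p - r) * r ^ r / p ^ p := by
        apply div_pos (mul_pos (Real.rpow_pos_of_pos hpr' _) (Real.rpow_pos_of_pos hr0 _))
          (Real.rpow_pos_of_pos hp _)
      -- key real identity
      have hid : ((p - r) ^ (p - r) * r ^ r / p ^ p) ^ (1/p : ℝ) * σ
          = ((p - r) / p * σ) ^ (1 - r / p) * ((r / p * σ) ^ r) ^ (1/p : ℝ) := by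
        have h1 : 0 < ((p - r) ^ (p - r) * r ^ r / p ^ p) ^ (1/p : ℝ) * σ :=
          mul_pos (Real.rpow_pos_of_pos hA _) hσ
        have h2 : 0 < ((p - r) / p * σ) ^ (1 - r / p) * ((r / p * σ) ^ r) ^ (1/p : ℝ) :=
          mul_pos (Real.rpow_pos_of_pos hτpos _)
            (Real.rpow_pos_of_pos (Real.rpow_pos_of_pos hrpσ _) _)
        apply Real.log_injOn_pos (mem_Ioi.2 h1) (mem_Ioi.2 h2)
        rw [Real.log_mul (Real.rpow_pos_of_pos hA _).ne' hσ.ne', Real.log_rpow hA,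
          Real.log_div (mul_pos (Real.rpow_pos_of_pos hpr' _) (Real.rpow_pos_of_pos hr0 _)).ne'
            (Real.rpow_pos_of_pos hp _).ne',
          Real.log_mul (Real.rpow_pos_of_pos hpr' _).ne' (Real.rpow_pos_of_pos hr0 _).ne',
          Real.log_rpow hpr', Real.log_rpow hr0, Real.log_rpow hp,
          Real.log_mul (Real.rpow_pos_of_pos hτpos _).ne'
            (Real.rpow_pos_of_pos (Real.rpow_pos_of_pos hrpσ _) _).ne',
          Real.log_rpow hτpos, Real.log_rpow (Real.rpow_pos_of_pos hrpσ _), Real.log_rpow hrpσ,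
          Real.log_mul hθpos.ne' hσ.ne', Real.log_mul (div_pos hr0 hp).ne' hσ.ne',
          Real.log_div hpr'.ne' hp.ne', Real.log_div hr0.ne' hp.ne']
        field_simp
        ring
      -- combine
      have h3 : (ENNReal.ofReal ((r / p * σ) ^ r) * μ {y | σ < |f y|}) ^ (1/p : ℝ)
          ≤ (∫⁻ x, ENNReal.ofReal (max (|f x| - (p - r) / p * σ) 0 ^ r) ∂μ) ^ (1/p : ℝ) :=
        ENNReal.rpow_le_rpow hIlow (by positivity)
      rw [ENNReal.mul_rpow_of_nonneg _ _ (by positivity),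
        ENNReal.ofReal_rpow_of_nonneg (by positivity) (by positivity)] at h3
      calc ENNReal.ofReal (((p - r) ^ (p - r) * r ^ r / p ^ p) ^ (1/p : ℝ))
            * (ENNReal.ofReal σ * μ {y | σ < |f y|} ^ (1/p : ℝ))
          = ENNReal.ofReal (((p - r) ^ (p - r) * r ^ r / p ^ p) ^ (1/p : ℝ) * σ)
              * μ {y | σ < |f y|} ^ (1/p : ℝ) := by
            rw [← mul_assoc, ← ENNReal.ofReal_mul (by positivity)]
        _ = ENNReal.ofReal (((p - r) / p * σ) ^ (1 - r / p))
              * (ENNReal.ofReal (((r / p * σ) ^ r) ^ (1/p : ℝ)) * μ {y | σ < |f y|} ^ (1/p : ℝ)) := by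
            rw [hid, ENNReal.ofReal_mul (by positivity), mul_assoc]
        _ ≤ ENNReal.ofReal (((p - r) / p * σ) ^ (1 - r / p))
              * (∫⁻ x, ENNReal.ofReal (max (|f x| - (p - r) / p * σ) 0 ^ r) ∂μ) ^ (1/p : ℝ) :=
            mul_le_mul_right h3 _
    · -- upper bound
      have hC : (0:ℝ) < Real.Gamma (p - r) * Real.Gamma (r + 1) / Real.Gamma p := by
        have := Real.Gamma_pos_of_pos (show (0:ℝ) < r + 1 by linarith)
        positivity
      by_cases hWtop : weakq μ p 0 f = ⊤
      · rw [hWtop, ENNReal.mul_top ((ENNReal.ofReal_pos.2 (Real.rpow_pos_of_pos hC _)).ne')]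
        exact le_top
      · have hW : weakq μ p 0 f ≠ ⊤ := hWtop
        have hWp : (weakq μ p 0 f) ^ p ≠ ⊤ := ENNReal.rpow_ne_top_of_nonneg hp.le hW
        -- tail bound
        have htail : ∀ t : ℝ, 0 < t →
            μ {y | t < |f y|} ≤ (weakq μ p 0 f) ^ p * ENNReal.ofReal (t ^ (-p)) := by
          intro t ht
          have hle : ENNReal.ofReal t * (μ {y | t < |f y|}) ^ (1/p : ℝ) ≤ weakq μ p 0 f := by
            rw [weakq_zero μ p f hf]
            exact le_iSup (fun τ : {t : ℝ // 0 < t} =>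
              ENNReal.ofReal (τ : ℝ) * (μ {y | (τ : ℝ) < |f y|}) ^ (1/p : ℝ)) ⟨t, ht⟩
          have h2 := ENNReal.rpow_le_rpow hle hp.le
          rw [ENNReal.mul_rpow_of_nonneg _ _ hp.le, ← ENNReal.rpow_mul,
            one_div_mul_cancel hp.ne', ENNReal.rpow_one] at h2
          have h3 : μ {y | t < |f y|} ≤ (weakq μ p 0 f) ^ p / (ENNReal.ofReal t) ^ p := by
            rw [ENNReal.le_div_iff_mul_le
              (Or.inl (ENNReal.rpow_pos (ENNReal.ofReal_pos.2 ht) ENNReal.ofReal_ne_top).ne')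
              (Or.inl (ENNReal.rpow_ne_top_of_nonneg hp.le ENNReal.ofReal_ne_top))]
            rw [mul_comm]
            exact h2
          rw [div_eq_mul_inv, ← ENNReal.rpow_neg, ENNReal.ofReal_rpow_of_pos ht] at h3
          exact h3
        -- bound each term of the sup
        rw [hwr]
        refine iSup_le fun τ0 => ?_
        obtain ⟨τ, hτ⟩ := τ0
        set I := ∫⁻ x, ENNReal.ofReal (max (|f x| - τ) 0 ^ r) ∂μ with hIdef
        have hlayer : I = ENNReal.ofReal r
            * ∫⁻ t in Ioi (0:ℝ), μ {y | τ + t < |f y|} * ENNReal.ofReal (t ^ (r - 1)) := by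
          have g_nn : 0 ≤ᵐ[μ] fun x => max (|f x| - τ) 0 :=
            Filter.Eventually.of_forall fun x => le_max_right _ _
          have g_mble : AEMeasurable (fun x => max (|f x| - τ) 0) μ :=
            ((hf.abs.sub measurable_const).max measurable_const).aemeasurable
          rw [hIdef, lintegral_rpow_eq_lintegral_meas_lt_mul μ g_nn g_mble hr0]
          congr 1
          refine setLIntegral_congr_fun measurableSet_Ioi
            (fun t ht => ?_)
          rw [mem_Ioi] at ht
          have hset : {a | t < max (|f a| - τ) 0} = {y | τ + t < |f y|} := by
            ext x
            simp only [mem_setOf_eq, lt_max_iff]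
            constructor
            · rintro (h | h)
              · linarith
              · linarith
            · intro h
              left
              linarith
          rw [hset]
        have hbound : (∫⁻ t in Ioi (0:ℝ), μ {y | τ + t < |f y|} * ENNReal.ofReal (t ^ (r - 1)))
            ≤ (weakq μ p 0 f) ^ p * ENNReal.ofReal (τ ^ (r - p) * G) := by
          calc ∫⁻ t in Ioi (0:ℝ), μ {y | τ + t < |f y|} * ENNReal.ofReal (t ^ (r - 1))
              ≤ ∫⁻ t in Ioi (0:ℝ), (weakq μ p 0 f) ^ p
                  * ENNReal.ofReal ((τ + t) ^ (-p) * t ^ (r - 1)) := by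
                refine lintegral_mono_ae ?_
                filter_upwards [self_mem_ae_restrict
                  (measurableSet_Ioi : MeasurableSet (Ioi (0:ℝ)))] with t ht
                rw [mem_Ioi] at ht
                calc μ {y | τ + t < |f y|} * ENNReal.ofReal (t ^ (r - 1))
                    ≤ ((weakq μ p 0 f) ^ p * ENNReal.ofReal ((τ + t) ^ (-p)))
                        * ENNReal.ofReal (t ^ (r - 1)) :=
                      mul_le_mul_left (htail (τ + t) (by linarith)) _
                  _ = (weakq μ p 0 f) ^ p * ENNReal.ofReal ((τ + t) ^ (-p) * t ^ (r - 1)) := by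
                      rw [mul_assoc, ← ENNReal.ofReal_mul (Real.rpow_nonneg (by linarith) _)]
            _ = (weakq μ p 0 f) ^ p * ENNReal.ofReal (τ ^ (r - p) * G) := by
                rw [lintegral_const_mul' _ _ hWp, lintB hr0 hpr hτ]
        have hI : I ≤ ENNReal.ofReal (r * (τ ^ (r - p) * G)) * (weakq μ p 0 f) ^ p := by
          rw [hlayer]
          calc ENNReal.ofReal r
                * ∫⁻ t in Ioi (0:ℝ), μ {y | τ + t < |f y|} * ENNReal.ofReal (t ^ (r - 1))
              ≤ ENNReal.ofReal r * ((weakq μ p 0 f) ^ p * ENNReal.ofReal (τ ^ (r - p) * G)) :=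
                mul_le_mul_right hbound _
            _ = ENNReal.ofReal (r * (τ ^ (r - p) * G)) * (weakq μ p 0 f) ^ p := by
                rw [ENNReal.ofReal_mul hr0.le]
                ring
        -- real identity for the upper constant
        have hid2 : τ ^ (1 - r / p) * (r * (τ ^ (r - p) * G)) ^ (1/p : ℝ)
            = (Real.Gamma (p - r) * Real.Gamma (r + 1) / Real.Gamma p) ^ (1/p : ℝ) := by
          have hrG : (0:ℝ) < r * (τ ^ (r - p) * G) :=
            mul_pos hr0 (mul_pos (Real.rpow_pos_of_pos hτ _) hG)
          have hCrG : Real.Gamma (p - r) * Real.Gamma (r + 1) / Real.Gamma p = r * G := by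
            rw [Real.Gamma_add_one hr0.ne', hGdef]
            field_simp
          rw [hCrG]
          have h1 : 0 < τ ^ (1 - r / p) * (r * (τ ^ (r - p) * G)) ^ (1/p : ℝ) :=
            mul_pos (Real.rpow_pos_of_pos hτ _) (Real.rpow_pos_of_pos hrG _)
          have h2 : (0:ℝ) < (r * G) ^ (1/p : ℝ) := Real.rpow_pos_of_pos (mul_pos hr0 hG) _
          apply Real.log_injOn_pos (mem_Ioi.2 h1) (mem_Ioi.2 h2)
          rw [Real.log_mul (Real.rpow_pos_of_pos hτ _).ne' (Real.rpow_pos_of_pos hrG _).ne',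
            Real.log_rpow hτ, Real.log_rpow hrG, Real.log_rpow (mul_pos hr0 hG),
            Real.log_mul hr0.ne' (mul_pos (Real.rpow_pos_of_pos hτ _) hG).ne',
            Real.log_mul (Real.rpow_pos_of_pos hτ _).ne' hG.ne', Real.log_rpow hτ,
            Real.log_mul hr0.ne' hG.ne']
          field_simp
          ring
        -- finish
        calc ENNReal.ofReal (τ ^ (1 - r / p)) * I ^ (1/p : ℝ)
            ≤ ENNReal.ofReal (τ ^ (1 - r / p))
                * (ENNReal.ofReal (r * (τ ^ (r - p) * G)) * (weakq μ p 0 f) ^ p) ^ (1/p : ℝ) :=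
              mul_le_mul_right (ENNReal.rpow_le_rpow hI (by positivity)) _
          _ = ENNReal.ofReal (τ ^ (1 - r / p))
                * (ENNReal.ofReal ((r * (τ ^ (r - p) * G)) ^ (1/p : ℝ)) * weakq μ p 0 f) := by
              rw [ENNReal.mul_rpow_of_nonneg _ _ (by positivity), ← ENNReal.rpow_mul,
                mul_one_div, div_self hp.ne', ENNReal.rpow_one,
                ENNReal.ofReal_rpow_of_nonneg (by positivity) (by positivity)]
          _ = ENNReal.ofReal (τ ^ (1 - r / p) * (r * (τ ^ (r - p) * G)) ^ (1/p : ℝ))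
                * weakq μ p 0 f := by
              rw [← mul_assoc, ← ENNReal.ofReal_mul (by positivity)]
          _ = ENNReal.ofReal ((Real.Gamma (p - r) * Real.Gamma (r + 1) / Real.Gamma p) ^ (1/p : ℝ))
                * weakq μ p 0 f := by rw [hid2]


end
end

section
/- Let X be a measure space, p > r ≥ 0, and f ∈ L^p(X). Then [f]'_{p,r} ≤ ((p−r)^{p−r} · r^r / p^p)^{1/p} · ‖f‖_{L^p(X)}, with the convention 0⁰ = 1. Moreover, the constant is best possible: if f is the indicator function of a measurable subset of X of finite positive measure, then equality holds. -/
open MeasureTheory Real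
open scoped ENNReal

noncomputable section

private lemma key_real {p r τ t : ℝ} (hr : 0 < r) (hpr : r < p) (hτ : 0 < τ) (ht : 0 ≤ t) :
    τ ^ (p - r) * max (t - τ) 0 ^ r ≤ (p - r) ^ (p - r) * r ^ r / p ^ p * t ^ p := by
  have hp : 0 < p := hr.trans hpr
  have hpr' : 0 < p - r := by linarith
  rcases le_or_gt t τ with h | h
  · rw [max_eq_right (by linarith), Real.zero_rpow hr.ne', mul_zero]
    positivity
  · have htτ : 0 < t - τ := by linarith
    rw [max_eq_left htτ.le]
    set a := τ * (p / (p - r)) with ha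
    set b := (t - τ) * (p / r) with hb
    have ha0 : 0 ≤ a := by positivity
    have hb0 : 0 ≤ b := by positivity
    have hgm : a ^ ((p - r) / p) * b ^ (r / p) ≤ (p - r) / p * a + r / p * b :=
      Real.geom_mean_le_arith_mean2_weighted (by positivity) (by positivity) ha0 hb0
        (by field_simp; ring)
    have hsum : (p - r) / p * a + r / p * b = t := by
      rw [ha, hb]; field_simp; ring
    rw [hsum] at hgm
    have hpow : (a ^ ((p - r) / p) * b ^ (r / p)) ^ p ≤ t ^ p :=
      Real.rpow_le_rpow (by positivity) hgm hp.le
    rw [Real.mul_rpow (by positivity) (by positivity), ← Real.rpow_mul ha0,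
      ← Real.rpow_mul hb0, div_mul_cancel₀ _ hp.ne', div_mul_cancel₀ _ hp.ne'] at hpow
    have heq : a ^ (p - r) * b ^ r
        = τ ^ (p - r) * (t - τ) ^ r / ((p - r) ^ (p - r) * r ^ r / p ^ p) := by
      rw [ha, hb, Real.mul_rpow hτ.le (by positivity), Real.mul_rpow htτ.le (by positivity),
        Real.div_rpow hp.le hpr'.le, Real.div_rpow hp.le hr.le]
      have hppp : p ^ (p - r) * p ^ r = p ^ p := by
        rw [← Real.rpow_add hp]; ring_nf
      field_simp
      linear_combination hppp
    rw [heq, div_le_iff₀ (by positivity)] at hpow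
    linarith [hpow]

private lemma rr_pos {r : ℝ} (hr : 0 ≤ r) : 0 < r ^ r := by
  rcases hr.eq_or_lt with h | h
  · subst h; norm_num
  · positivity

private lemma const_id {p r : ℝ} (hr : 0 < r) (hpr : r < p) :
    ((p - r) ^ (p - r) * r ^ r / p ^ p) ^ (1 / p)
      = ((p - r) / p) ^ (1 - r / p) * (r / p) ^ (r / p) := by
  have hp : 0 < p := hr.trans hpr
  have hpr' : 0 < p - r := by linarith
  have h1 : (p - r) ^ (p - r) * r ^ r / p ^ p = ((p - r) / p) ^ (p - r) * (r / p) ^ r := by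
    rw [Real.div_rpow hpr'.le hp.le, Real.div_rpow hr.le hp.le,
      div_mul_div_comm, ← Real.rpow_add hp]
    ring_nf
  rw [h1, Real.mul_rpow (by positivity) (by positivity),
    ← Real.rpow_mul (by positivity), ← Real.rpow_mul (by positivity)]
  congr 1
  · congr 1; field_simp
  · congr 1; ring

private lemma weakq_le {α : Type*} [MeasurableSpace α] (μ : Measure α) (p r : ℝ)
    (hr : 0 ≤ r) (hpr : r < p) (f : α → ℝ) :
    weakq μ p r f
      ≤ ENNReal.ofReal (((p - r) ^ (p - r) * r ^ r / p ^ p) ^ (1 / p))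
          * eLpNorm f (ENNReal.ofReal p) μ := by
  have hp : 0 < p := hr.trans_lt hpr
  have hpr' : 0 < p - r := by linarith
  set C := (p - r) ^ (p - r) * r ^ r / p ^ p with hCdef
  have hC : 0 < C := div_pos (mul_pos (Real.rpow_pos_of_pos hpr' _) (rr_pos hr))
    (Real.rpow_pos_of_pos hp _)
  rw [eLpNorm_eq_lintegral_rpow_enorm_toReal (by simpa [ENNReal.ofReal_eq_zero] using hp)
    ENNReal.ofReal_ne_top, ENNReal.toReal_ofReal hp.le]
  refine iSup_le fun τ => ?_
  obtain ⟨τ, hτ⟩ := τ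
  simp only
  have hmain : ENNReal.ofReal (τ ^ (p - r)) *
      ∫⁻ x, (if r = 0 then Set.indicator {y | τ < |f y|} (fun _ => (1 : ℝ≥0∞)) x
              else ENNReal.ofReal (max (|f x| - τ) 0 ^ r)) ∂μ
      ≤ ENNReal.ofReal C * ∫⁻ x, (‖f x‖₊ : ℝ≥0∞) ^ p ∂μ := by
    rw [← lintegral_const_mul' _ _ ENNReal.ofReal_ne_top,
      ← lintegral_const_mul' _ _ ENNReal.ofReal_ne_top]
    refine lintegral_mono fun x => ?_
    have hnorm : (‖f x‖₊ : ℝ≥0∞) ^ p = ENNReal.ofReal (|f x| ^ p) := by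
      rw [← enorm_eq_nnnorm, ← ofReal_norm, Real.norm_eq_abs,
        ← ENNReal.ofReal_rpow_of_nonneg (abs_nonneg _) hp.le]
    by_cases hr0 : r = 0
    · subst hr0
      have hC1 : C = 1 := by
        rw [hCdef]; norm_num
        exact (Real.rpow_pos_of_pos hp _).ne'
      rw [hC1]
      simp only [if_pos rfl]
      by_cases hx : τ < |f x|
      · rw [Set.indicator_of_mem (show x ∈ {y | τ < |f y|} from hx), hnorm]
        simp only [if_true, mul_one, ENNReal.ofReal_one, one_mul, sub_zero]
        exact ENNReal.ofReal_le_ofReal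
          (Real.rpow_le_rpow hτ.le hx.le hp.le)
      · rw [Set.indicator_of_notMem (show x ∉ {y | τ < |f y|} from hx)]
        simp
    · have hrpos : 0 < r := hr.lt_of_ne' hr0
      simp only [hr0, if_false]
      rw [← ENNReal.ofReal_mul (by positivity), hnorm,
        ← ENNReal.ofReal_mul hC.le]
      exact ENNReal.ofReal_le_ofReal (key_real hrpos hpr hτ (abs_nonneg _))
  have := ENNReal.rpow_le_rpow hmain (by positivity : (0:ℝ) ≤ 1/p)
  rw [ENNReal.mul_rpow_of_nonneg _ _ (by positivity),
    ENNReal.mul_rpow_of_nonneg _ _ (by positivity),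
    ENNReal.ofReal_rpow_of_pos (by positivity),
    ENNReal.ofReal_rpow_of_pos hC] at this
  have hexp : (τ ^ (p - r)) ^ (1/p) = τ ^ (1 - r / p) := by
    rw [← Real.rpow_mul hτ.le]
    congr 1
    field_simp
  rwa [hexp] at this

/-- Weak-strong comparison: [f]'_{p,r} ≤ ((p−r)^{p−r} r^r / p^p)^{1/p} ‖f‖_{L^p},
with equality for indicator functions of sets of finite positive measure. -/
theorem weakq_le_strong {α : Type*} [MeasurableSpace α] (μ : Measure α) (p r : ℝ)
    (hr : 0 ≤ r) (hpr : r < p) (f : α → ℝ) (hf : MemLp f (ENNReal.ofReal p) μ) :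
    weakq μ p r f
        ≤ ENNReal.ofReal (((p - r) ^ (p - r) * r ^ r / p ^ p) ^ (1 / p))
            * eLpNorm f (ENNReal.ofReal p) μ ∧
      ∀ s : Set α, MeasurableSet s → 0 < μ s → μ s < ⊤ →
        weakq μ p r (s.indicator fun _ => (1 : ℝ))
          = ENNReal.ofReal (((p - r) ^ (p - r) * r ^ r / p ^ p) ^ (1 / p))
              * eLpNorm (s.indicator fun _ => (1 : ℝ)) (ENNReal.ofReal p) μ := by
  have hp : 0 < p := hr.trans_lt hpr
  refine ⟨weakq_le μ p r hr hpr f, fun s hs hs0 hstop => ?_⟩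
  have hq0 : ENNReal.ofReal p ≠ 0 := by simpa [ENNReal.ofReal_eq_zero] using hp
  have hA : eLpNorm (s.indicator fun _ => (1 : ℝ)) (ENNReal.ofReal p) μ = μ s ^ (1/p) := by
    rw [eLpNorm_indicator_const hs hq0 ENNReal.ofReal_ne_top, ENNReal.toReal_ofReal hp.le]
    simp
  refine le_antisymm (weakq_le μ p r hr hpr _) ?_
  rw [hA]
  by_cases hr0 : r = 0
  · -- r = 0 : constant is 1, take τ → 1⁻
    subst hr0
    have hC1 : ENNReal.ofReal (((p - 0) ^ (p - 0) * (0:ℝ) ^ (0:ℝ) / p ^ p) ^ (1/p)) = 1 := by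
      norm_num
      rw [div_self (Real.rpow_pos_of_pos hp _).ne', Real.one_rpow]
    rw [hC1, one_mul]
    set A := μ s ^ (1/p) with hAdef
    have hA0 : A ≠ 0 := (ENNReal.rpow_pos hs0 hstop.ne).ne'
    have hAt : A ≠ ⊤ := (ENNReal.rpow_lt_top_of_nonneg (by positivity) hstop.ne).ne
    refine le_of_forall_lt fun b hb => ?_
    set c := b / A with hcdef
    have hc1 : c < 1 := by
      rw [hcdef, ENNReal.div_lt_iff (Or.inl hA0) (Or.inl hAt), one_mul]
      exact hb
    have hct : c ≠ ⊤ := hc1.ne_top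
    have hcr : c.toReal < 1 :=
      ENNReal.toReal_lt_of_lt_ofReal (by rwa [ENNReal.ofReal_one])
    set τ := (c.toReal + 1) / 2 with hτdef
    have hτ0 : 0 < τ := by
      have := ENNReal.toReal_nonneg (a := c); rw [hτdef]; linarith
    have hτ1 : τ < 1 := by rw [hτdef]; linarith
    refine lt_of_lt_of_le ?_ (le_iSup _ ⟨τ, hτ0⟩)
    simp only
    have hset : {y | τ < |Set.indicator s (fun _ => (1:ℝ)) y|} = s := by
      ext y
      by_cases hy : y ∈ s
      · simp [Set.indicator_of_mem hy, hy, hτ1]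
      · simp only [Set.mem_setOf_eq, Set.indicator_of_notMem hy, abs_zero, hy, iff_false]
        exact not_lt.2 hτ0.le
    simp only [if_pos rfl, if_true, hset]
    rw [lintegral_indicator_const hs (1 : ℝ≥0∞), one_mul]
    have hτexp : τ ^ (1 - (0:ℝ)/p) = τ := by
      norm_num
    rw [hτexp, ← hAdef]
    have hb' : b = c * A := (ENNReal.div_mul_cancel hA0 hAt).symm
    rw [hb']
    refine (ENNReal.mul_lt_mul_iff_left hA0 hAt).2 ?_
    calc c = ENNReal.ofReal c.toReal := (ENNReal.ofReal_toReal hct).symm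
      _ < ENNReal.ofReal τ := by
          rw [ENNReal.ofReal_lt_ofReal_iff hτ0, hτdef]; linarith
  · -- r > 0 : optimal τ₀ = (p - r)/p
    have hrpos : 0 < r := hr.lt_of_ne' hr0
    have hpr' : 0 < p - r := by linarith
    set τ₀ := (p - r) / p with hτ₀def
    have hτ₀0 : 0 < τ₀ := by positivity
    have hτ₀1 : τ₀ < 1 := by
      rw [hτ₀def, div_lt_one hp]; linarith
    refine le_trans ?_ (le_iSup _ ⟨τ₀, hτ₀0⟩)
    simp only [if_neg hr0]
    have hfun : (fun x => ENNReal.ofReal (max (|Set.indicator s (fun _ => (1:ℝ)) x| - τ₀) 0 ^ r))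
        = s.indicator (fun _ => ENNReal.ofReal ((1 - τ₀) ^ r)) := by
      funext x
      by_cases hx : x ∈ s
      · rw [Set.indicator_of_mem hx, Set.indicator_of_mem hx, abs_one,
          max_eq_left (by linarith)]
      · rw [Set.indicator_of_notMem hx, Set.indicator_of_notMem hx, abs_zero,
          max_eq_right (by linarith), Real.zero_rpow hr0, ENNReal.ofReal_zero]
    rw [hfun, lintegral_indicator_const hs]
    have h1τ₀ : (0:ℝ) < (1 - τ₀) ^ r := Real.rpow_pos_of_pos (by linarith) _
    rw [ENNReal.mul_rpow_of_nonneg _ _ (by positivity : (0:ℝ) ≤ 1/p),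
      ENNReal.ofReal_rpow_of_pos h1τ₀, ← mul_assoc, ← ENNReal.ofReal_mul (by positivity)]
    have hconst : ((p - r) ^ (p - r) * r ^ r / p ^ p) ^ (1/p)
        = τ₀ ^ (1 - r / p) * ((1 - τ₀) ^ r) ^ (1/p) := by
      have h1τ : 1 - τ₀ = r / p := by rw [hτ₀def]; field_simp; ring
      rw [const_id hrpos hpr, h1τ, ← Real.rpow_mul (by positivity : (0:ℝ) ≤ r / p),
        mul_one_div, hτ₀def]
    rw [hconst]
end
end
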